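/- Assume additionally that: every leaf of C has a nonempty label set L(leaf) ≠ ∅; the total label set N(V(C)) contains μ and at least one further label; and no edge of C is μ-important. If u and v are two distinct μ-important vertices of C, then every internal vertex w of the unique path in C from u to v has degree exactly 2 in C, satisfies L(w) = ∅, and is itself μ-important. -/

import Mathlib

/-- The set of labels carried by a set `S` of vertices. -/
def labelSet {V M : Type*} (L : V → Set M) (S : Set V) : Set M :=
  ⋃ v ∈ S, L v

/-- The connected component of `u` in the graph `C` with the edge `s(u, v)` deleted.
For a tree `C` and an edge `uv`, `edgeSide C u v` and `edgeSide C v u` are the two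
connected components of `C − uv`. -/
def edgeSide {V : Type*} (C : SimpleGraph V) (u v : V) : Set V :=
  {w | (C.deleteEdges {s(u, v)}).Reachable u w}

/-- The edge `uv` of `C` is `μ`-important: for each of the two components `K` of `C − uv`,
the label set of `K` properly contains `{μ}`. -/
def ImportantEdge {V M : Type*} (C : SimpleGraph V) (L : V → Set M) (μ : M) (u v : V) :
    Prop :=
  C.Adj u v ∧
    (μ ∈ labelSet L (edgeSide C u v) ∧ labelSet L (edgeSide C u v) ≠ {μ}) ∧
    (μ ∈ labelSet L (edgeSide C v u) ∧ labelSet L (edgeSide C v u) ≠ {μ})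

/-- The graph `C` with the vertex `v` deleted (all edges incident to `v` removed). -/
def delVertex {V : Type*} (C : SimpleGraph V) (v : V) : SimpleGraph V :=
  C.deleteEdges {e : Sym2 V | v ∈ e}

/-- The connected component of `w` in `C − v`. -/
def vertComp {V : Type*} (C : SimpleGraph V) (v w : V) : Set V :=
  {x | (delVertex C v).Reachable w x}

/-- The vertex `v` of `C` is `μ`-important: every connected component `T` of `C − v`
has label set equal to `{μ}` or not containing `μ` at all. -/
def ImportantVertex {V M : Type*} (C : SimpleGraph V) (L : V → Set M) (μ : M) (v : V) :
    Prop :=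
  ∀ w : V, w ≠ v →
    labelSet L (vertComp C v w) = {μ} ∨ μ ∉ labelSet L (vertComp C v w)

open SimpleGraph Walk

section Helpers

variable {V : Type*} {C : SimpleGraph V}

lemma labelSet_mono {M : Type*} (L : V → Set M) {S T : Set V} (h : S ⊆ T) :
    labelSet L S ⊆ labelSet L T := by
  intro m hm
  simp only [labelSet, Set.mem_iUnion] at hm ⊢
  obtain ⟨x, hx, hmx⟩ := hm
  exact ⟨x, h hx, hmx⟩

lemma subset_labelSet {M : Type*} (L : V → Set M) {S : Set V} {x : V} (hx : x ∈ S) :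
    L x ⊆ labelSet L S := by
  intro m hm
  simp only [labelSet, Set.mem_iUnion]
  exact ⟨x, hx, hm⟩

lemma mem_labelSet_iff {M : Type*} (L : V → Set M) {S : Set V} {m : M} :
    m ∈ labelSet L S ↔ ∃ x ∈ S, m ∈ L x := by
  simp [labelSet]

/-- A walk avoiding `w` yields reachability in `C − w`. -/
lemma reach_delVertex_of_not_mem_support {w s t : V} (p : C.Walk s t) (hp : w ∉ p.support) :
    (delVertex C w).Reachable s t := by
  induction p with
  | nil => exact Reachable.refl _
  | @cons s b t h q ih =>
    simp only [Walk.support_cons, List.mem_cons, not_or] at hp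
    obtain ⟨h1, h2⟩ := hp
    have hb : w ≠ b := fun hwb => h2 (hwb ▸ q.start_mem_support)
    have hadj : (delVertex C w).Adj s b := by
      refine SimpleGraph.deleteEdges_adj.mpr ⟨h, ?_⟩
      simp only [Set.mem_setOf_eq, Sym2.mem_iff, not_or]
      exact ⟨h1, hb⟩
    exact (hadj.reachable).trans (ih h2)

lemma delVertex_le_deleteEdges (w : V) {e : Sym2 V} (he : w ∈ e) :
    delVertex C w ≤ C.deleteEdges {e} :=
  SimpleGraph.deleteEdges_anti (by intro e' he'; simp only [Set.mem_singleton_iff] at he'; subst he'; exact he)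

lemma not_reachable_deleteEdges (hC : C.IsTree) {a w : V} (h : C.Adj a w) :
    ¬ (C.deleteEdges {s(a, w)}).Reachable a w := by
  have hb : C.IsBridge s(a, w) :=
    (SimpleGraph.isAcyclic_iff_forall_edge_isBridge.mp hC.IsAcyclic) h
  exact SimpleGraph.isBridge_iff.mp hb

/-- In a tree, the side of `b` across the edge `wb` avoids `w` entirely. -/
lemma edgeSide_subset_vertComp (hC : C.IsTree) {w b : V} (h : C.Adj b w) :
    edgeSide C b w ⊆ vertComp C w b := by
  classical
  intro x hx
  obtain ⟨p0⟩ := hx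
  have hedges : ∀ e ∈ p0.bypass.edges, e ∈ C.edgeSet := fun e he =>
    SimpleGraph.edgeSet_mono (SimpleGraph.deleteEdges_le _)
      (p0.bypass.edges_subset_edgeSet he)
  set q : C.Walk b x := p0.bypass.transfer C hedges with hq
  have hqp : q.IsPath := (p0.bypass_isPath).transfer hedges
  have hwsupp : w ∉ q.support := by
    intro hmem
    have hr : (q.takeUntil w hmem).IsPath := hqp.takeUntil hmem
    have hsingle : (Walk.cons h Walk.nil : C.Walk b w).IsPath := by
      rw [Walk.cons_isPath_iff]
      exact ⟨Walk.IsPath.nil, by simp [h.ne]⟩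
    have hequ : q.takeUntil w hmem = Walk.cons h Walk.nil :=
      (hC.existsUnique_path b w).unique hr hsingle
    have hbw : s(b, w) ∈ (q.takeUntil w hmem).edges := by
      rw [hequ]; simp
    have hbw2 : s(b, w) ∈ q.edges := q.edges_takeUntil_subset hmem hbw
    rw [hq, Walk.edges_transfer] at hbw2
    have hbw3 : s(b, w) ∈ p0.edges := p0.edges_bypass_subset hbw2
    have := p0.edges_subset_edgeSet hbw3
    rw [SimpleGraph.edgeSet_deleteEdges] at this
    exact this.2 rfl
  exact reach_delVertex_of_not_mem_support q hwsupp

/-- In a tree, the branch of `b` at `w` is contained in the `w`-side of any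
other edge `wa` at `w`. -/
lemma branch_subset_side (hC : C.IsTree) {w a b : V} (hwa : C.Adj w a) (hwb : C.Adj w b)
    (hab : a ≠ b) : edgeSide C b w ⊆ edgeSide C w a := by
  intro x hx
  have h1 : (delVertex C w).Reachable b x := edgeSide_subset_vertComp hC hwb.symm hx
  have h2 : (C.deleteEdges {s(w, a)}).Reachable b x :=
    h1.mono (delVertex_le_deleteEdges w (by simp))
  have hadj : (C.deleteEdges {s(w, a)}).Adj w b := by
    refine SimpleGraph.deleteEdges_adj.mpr ⟨hwb, ?_⟩
    simp only [Set.mem_singleton_iff, Sym2.eq_iff]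
    rintro (⟨-, rfl⟩ | ⟨rfl, rfl⟩)
    · exact hab rfl
    · exact hab rfl
  exact (hadj.reachable).trans h2

/-- The two sides of an edge cover everything (for a connected graph). -/
lemma mem_edgeSide_union (hconn : C.Connected) (a w x : V) :
    x ∈ edgeSide C a w ∪ edgeSide C w a := by
  have key : ∀ {s t : V} (_ : C.Walk s t),
      s ∈ edgeSide C a w ∪ edgeSide C w a → t ∈ edgeSide C a w ∪ edgeSide C w a := by
    intro s t p
    induction p with
    | nil => exact id
    | @cons s b t h q ih =>
      intro hs
      refine ih ?_
      by_cases he : s(s, b) = s(a, w)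
      · rw [Sym2.eq_iff] at he
        rcases he with ⟨rfl, rfl⟩ | ⟨rfl, rfl⟩
        · exact Or.inr (Reachable.refl _)
        · exact Or.inl (Reachable.refl _)
      · have hadj : (C.deleteEdges {s(a, w)}).Adj s b :=
          SimpleGraph.deleteEdges_adj.mpr ⟨h, by simpa using he⟩
        have hadj' : (C.deleteEdges {s(w, a)}).Adj s b := by
          refine SimpleGraph.deleteEdges_adj.mpr ⟨h, ?_⟩
          simpa [Sym2.eq_swap (a := w) (b := a)] using he
        rcases hs with hs | hs
        · exact Or.inl (hs.trans hadj.reachable)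
        · exact Or.inr (hs.trans hadj'.reachable)
  obtain ⟨p⟩ := hconn a x
  exact key p (Or.inl (Reachable.refl _))

/-- Importance transfer: if the important vertex `u'` is not on the `w`-side of the
edge `wa`, then the labels on that side are `⊆ {μ}` or avoid `μ`. -/
lemma side_labels {M : Type*} (L : V → Set M) (μ : M) {u' w a : V}
    (hu' : ImportantVertex C L μ u') (hne : u' ∉ edgeSide C w a) :
    labelSet L (edgeSide C w a) ⊆ {μ} ∨ μ ∉ labelSet L (edgeSide C w a) := by
  classical
  have hsub : edgeSide C w a ⊆ vertComp C u' w := by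
    intro x hx
    obtain ⟨p0⟩ := hx
    have hu'' : u' ∉ p0.support := by
      intro hmem
      exact hne ⟨p0.takeUntil u' hmem⟩
    have hedges : ∀ e ∈ p0.edges, e ∈ C.edgeSet := fun e he =>
      SimpleGraph.edgeSet_mono (SimpleGraph.deleteEdges_le _) (p0.edges_subset_edgeSet he)
    have := reach_delVertex_of_not_mem_support (p0.transfer C hedges)
      (by rwa [Walk.support_transfer])
    exact this
  have hwne : w ≠ u' := by
    intro h
    exact hne (h ▸ (Reachable.refl w : w ∈ edgeSide C w a))
  rcases hu' w hwne with h | h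
  · left; exact (labelSet_mono L hsub).trans h.le
  · right; exact fun hmem => h (labelSet_mono L hsub hmem)

lemma upgrade {M : Type*} {μ : M} {A B : Set M} (hAB : A ⊆ B)
    (hB : B ⊆ {μ} ∨ μ ∉ B) : A = {μ} ∨ μ ∉ A := by
  by_cases hμ : μ ∈ A
  · rcases hB with hB | hB
    · left
      exact Set.Subset.antisymm (hAB.trans hB) (by simpa using hμ)
    · exact absurd (hAB hμ) hB
  · exact Or.inr hμ

end Helpers

/-- Assume every leaf of the finite tree `C` has a nonempty label set, the
total label set contains `μ` and at least one further label, and no edge of `C` is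
`μ`-important. If `u ≠ v` are `μ`-important vertices, then every internal vertex `w` of
the unique path from `u` to `v` has degree exactly `2`, has `L w = ∅`, and is itself
`μ`-important. -/
theorem statement_5 {V M : Type*} [Fintype V] (C : SimpleGraph V) [DecidableRel C.Adj]
    (hC : C.IsTree) (L : V → Set M) (μ : M)
    (hleaf : ∀ v : V, C.degree v = 1 → L v ≠ ∅)
    (htotalμ : μ ∈ labelSet L Set.univ)
    (htotal2 : ∃ m : M, m ∈ labelSet L Set.univ ∧ m ≠ μ)
    (hnoedge : ∀ a b : V, ¬ ImportantEdge C L μ a b)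
    (u v : V) (huv : u ≠ v)
    (hu : ImportantVertex C L μ u) (hv : ImportantVertex C L μ v)
    (p : C.Walk u v) (hp : p.IsPath)
    (w : V) (hw : w ∈ p.support) (hwu : w ≠ u) (hwv : w ≠ v) :
    C.degree w = 2 ∧ L w = ∅ ∧ ImportantVertex C L μ w := by
  classical
  obtain ⟨m, hm, hmμ⟩ := htotal2
  have hconn := hC.isConnected
  -- split the path at w
  have hps : p = (p.takeUntil w hw).append (p.dropUntil w hw) := (p.take_spec hw).symm
  have hq1p : (p.takeUntil w hw).IsPath := hp.takeUntil hw
  have hq2p : (p.dropUntil w hw).IsPath := hp.dropUntil hw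
  obtain ⟨a, hwa, r1, hr1⟩ := Walk.exists_eq_cons_of_ne hwu (p.takeUntil w hw).reverse
  obtain ⟨b, hwb, r2, hr2⟩ := Walk.exists_eq_cons_of_ne hwv (p.dropUntil w hw)
  -- hwa : C.Adj w a, r1 : C.Walk a u;  hwb : C.Adj w b, r2 : C.Walk b v
  have hr1p : r1.IsPath ∧ w ∉ r1.support := by
    have := hq1p.reverse
    rw [hr1, Walk.cons_isPath_iff] at this
    exact this
  have hr2p : r2.IsPath ∧ w ∉ r2.support := by
    have := hq2p
    rw [hr2, Walk.cons_isPath_iff] at this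
    exact this
  -- u is on a's side of the edge aw
  have huside : u ∈ edgeSide C a w := by
    refine ⟨r1.toDeleteEdges {s(a, w)} ?_⟩
    intro e he
    simp only [Set.mem_singleton_iff]
    rintro rfl
    exact hr1p.2 (r1.snd_mem_support_of_mem_edges he)
  have hvside : v ∈ edgeSide C b w := by
    refine ⟨r2.toDeleteEdges {s(b, w)} ?_⟩
    intro e he
    simp only [Set.mem_singleton_iff]
    rintro rfl
    exact hr2p.2 (r2.snd_mem_support_of_mem_edges he)
  -- a ≠ b
  have hab : a ≠ b := by
    intro h
    subst h
    have hasup : a ∈ (p.takeUntil w hw).support := by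
      have : a ∈ (p.takeUntil w hw).reverse.support := by
        rw [hr1]
        simp [Walk.support_cons]
      rwa [Walk.support_reverse, List.mem_reverse] at this
    have hbsup : a ∈ (p.dropUntil w hw).support.tail := by
      rw [hr2]
      simp [Walk.support_cons]
    have hnodup := hp.support_nodup
    rw [hps, Walk.support_append] at hnodup
    exact (List.disjoint_of_nodup_append hnodup) hasup hbsup
  -- u not on w's side of edge wa
  have hu_notin : u ∉ edgeSide C w a := by
    intro hmem
    have h1 : (C.deleteEdges {s(a, w)}).Reachable w u := by
      have : ({s(w, a)} : Set (Sym2 V)) = {s(a, w)} := by rw [Sym2.eq_swap]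
      exact this ▸ hmem
    exact (not_reachable_deleteEdges hC hwa.symm) (huside.trans h1.symm)
  have hv_notin : v ∉ edgeSide C w b := by
    intro hmem
    have h1 : (C.deleteEdges {s(b, w)}).Reachable w v := by
      have : ({s(w, b)} : Set (Sym2 V)) = {s(b, w)} := by rw [Sym2.eq_swap]
      exact this ▸ hmem
    exact (not_reachable_deleteEdges hC hwb.symm) (hvside.trans h1.symm)
  set SA := edgeSide C w a with hSA
  set SB := edgeSide C w b with hSB
  set X := labelSet L SA with hX
  set Y := labelSet L SB with hY
  have h1 : X ⊆ {μ} ∨ μ ∉ X := side_labels L μ hu hu_notin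
  have h2 : Y ⊆ {μ} ∨ μ ∉ Y := side_labels L μ hv hv_notin
  -- the two w-sides cover everything
  have hcoverV : ∀ x : V, x ∈ SA ∪ SB := by
    intro x
    rcases mem_edgeSide_union hconn b w x with hx | hx
    · exact Or.inl (branch_subset_side hC hwa hwb hab hx)
    · exact Or.inr hx
  have hcover : labelSet L Set.univ ⊆ X ∪ Y := by
    intro t ht
    rw [mem_labelSet_iff] at ht
    obtain ⟨x, -, hx⟩ := ht
    rcases hcoverV x with h | h
    · exact Or.inl (subset_labelSet L h hx)
    · exact Or.inr (subset_labelSet L h hx)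
  -- X and Y are disjoint
  have hdisj : ∀ t, t ∈ X → t ∈ Y → False := by
    intro t htX htY
    rcases h1 with h1 | h1 <;> rcases h2 with h2 | h2
    · rcases hcover hm with h | h
      · exact hmμ (h1 h)
      · exact hmμ (h2 h)
    · exact h2 (h1 htX ▸ htY)
    · exact h1 (h2 htY ▸ htX)
    · rcases hcover htotalμ with h | h
      · exact h1 h
      · exact h2 h
  -- L w = ∅
  have hwSA : w ∈ SA := Reachable.refl w
  have hwSB : w ∈ SB := Reachable.refl w
  have hLw : L w = ∅ := by
    rw [Set.eq_empty_iff_forall_notMem]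
    intro t ht
    exact hdisj t (subset_labelSet L hwSA ht) (subset_labelSet L hwSB ht)
  -- every neighbor of w is a or b
  have hnbr : ∀ c : V, C.Adj w c → c = a ∨ c = b := by
    intro c hwc
    by_contra hcon
    push_neg at hcon
    obtain ⟨hca, hcb⟩ := hcon
    set Bc := edgeSide C c w with hBc
    have hBcA : Bc ⊆ SA := branch_subset_side hC hwa hwc (fun h => hca h.symm) |>.trans (le_refl _)
    have hBcB : Bc ⊆ SB := branch_subset_side hC hwb hwc (fun h => hcb h.symm)
    have hBcempty : ∀ x ∈ Bc, L x = ∅ := by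
      intro x hx
      rw [Set.eq_empty_iff_forall_notMem]
      intro t ht
      exact hdisj t (subset_labelSet L (hBcA hx) ht) (subset_labelSet L (hBcB hx) ht)
    have hwBc : w ∉ Bc := fun h => (not_reachable_deleteEdges hC hwc.symm) h
    -- pick x in Bc at maximal distance from w
    have hcBc : c ∈ Bc := Reachable.refl c
    set F : Finset V := Finset.univ.filter (· ∈ Bc) with hF
    have hFne : F.Nonempty := ⟨c, by simp [hF, hcBc]⟩
    obtain ⟨x, hxF, hxmax⟩ := F.exists_max_image (fun y => C.dist w y) hFne
    have hxBc : x ∈ Bc := by simpa [hF] using hxF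
    have hmax : ∀ y ∈ Bc, C.dist w y ≤ C.dist w x := by
      intro y hy
      exact hxmax y (by simp [hF, hy])
    have hxw : x ≠ w := fun h => hwBc (h ▸ hxBc)
    obtain ⟨P, hPp, hPl⟩ := hconn.exists_path_of_dist w x
    set d := C.dist w x with hd
    have hd1 : 1 ≤ d := by
      rcases Nat.eq_zero_or_pos d with h | h
      · exact absurd ((hconn.dist_eq_zero_iff).mp h) (Ne.symm hxw)
      · exact h
    -- every neighbor z of x equals P.getVert (d-1)
    have hnbrx : ∀ z : V, C.Adj x z → z = P.getVert (d - 1) := by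
      intro z hxz
      have hzBcw : z ∈ Bc ∨ z = w := by
        by_cases he : s(x, z) = s(c, w)
        · rw [Sym2.eq_iff] at he
          rcases he with ⟨rfl, rfl⟩ | ⟨rfl, rfl⟩
          · exact Or.inr rfl
          · exact absurd rfl hxw
        · left
          have hadj : (C.deleteEdges {s(c, w)}).Adj x z :=
            SimpleGraph.deleteEdges_adj.mpr ⟨hxz, by simpa using he⟩
          exact (hxBc : (C.deleteEdges {s(c,w)}).Reachable c x).trans hadj.reachable
      have hdz : C.dist w z ≤ d := by
        rcases hzBcw with h | h
        · exact hmax z h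
        · rw [h, SimpleGraph.dist_self]; exact Nat.zero_le _
      by_cases hzP : z ∈ P.support
      · have hzx : z ≠ x := fun h => (C.irrefl (h ▸ hxz))
        have hA : (P.takeUntil z hzP).IsPath := hPp.takeUntil hzP
        have hB : (P.dropUntil z hzP).IsPath := hPp.dropUntil hzP
        have hsingle : (Walk.cons hxz.symm Walk.nil : C.Walk z x).IsPath := by
          rw [Walk.cons_isPath_iff]
          exact ⟨Walk.IsPath.nil, by simpa using hzx⟩
        have hequ : P.dropUntil z hzP = Walk.cons hxz.symm Walk.nil :=
          (hC.existsUnique_path z x).unique hB hsingle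
        have hPs : P = (P.takeUntil z hzP).append (Walk.cons hxz.symm Walk.nil) := by
          rw [← hequ]; exact (P.take_spec hzP).symm
        have hlen : (P.takeUntil z hzP).length + 1 = d := by
          have := congrArg Walk.length hPs
          rw [Walk.length_append] at this
          simp only [Walk.length_cons, Walk.length_nil] at this
          omega
        have hlen' : (P.takeUntil z hzP).length = d - 1 := by omega
        rw [hPs, Walk.getVert_append]
        rw [hlen']
        simp
      · -- z ∉ P.support : contradiction via two distinct paths from z to w
        exfalso
        have hcons : (Walk.cons hxz.symm P.reverse : C.Walk z w).IsPath := by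
          rw [Walk.cons_isPath_iff]
          refine ⟨hPp.reverse, ?_⟩
          rwa [Walk.support_reverse, List.mem_reverse]
        obtain ⟨Q, hQp, hQl⟩ := hconn.exists_path_of_dist w z
        have hequ : Walk.cons hxz.symm P.reverse = Q.reverse :=
          (hC.existsUnique_path z w).unique hcons hQp.reverse
        have : P.reverse.length + 1 = Q.reverse.length := by
          rw [← hequ]; simp
        rw [Walk.length_reverse, Walk.length_reverse, hPl, hQl] at this
        omega
    -- x is a leaf
    have hyadj : C.Adj x (P.getVert (d - 1)) := by
      have hlt : d - 1 < P.length := by omega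
      have := P.adj_getVert_succ hlt
      have hd' : d - 1 + 1 = d := by omega
      rw [hd'] at this
      have hgl : P.getVert d = x := by rw [← hPl]; exact P.getVert_length
      rw [hgl] at this
      exact this.symm
    have hdeg : C.degree x = 1 := by
      rw [← SimpleGraph.card_neighborFinset_eq_degree]
      have : C.neighborFinset x = {P.getVert (d - 1)} := by
        ext z
        simp only [SimpleGraph.mem_neighborFinset, Finset.mem_singleton]
        constructor
        · exact hnbrx z
        · rintro rfl; exact hyadj
      rw [this, Finset.card_singleton]
    exact hleaf x hdeg (hBcempty x hxBc)
  -- degree w = 2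
  have hdegw : C.degree w = 2 := by
    rw [← SimpleGraph.card_neighborFinset_eq_degree]
    have : C.neighborFinset w = {a, b} := by
      ext z
      simp only [SimpleGraph.mem_neighborFinset, Finset.mem_insert, Finset.mem_singleton]
      constructor
      · exact hnbr z
      · rintro (rfl | rfl)
        · exact hwa
        · exact hwb
    rw [this, Finset.card_insert_of_notMem (by simpa using hab), Finset.card_singleton]
  refine ⟨hdegw, hLw, ?_⟩
  -- w is important
  intro x hxw
  have hx2 : (delVertex C w).Reachable a x ∨ (delVertex C w).Reachable b x := by
    obtain ⟨P0⟩ := hconn w x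
    set Q := P0.bypass with hQ
    have hQp : Q.IsPath := P0.bypass_isPath
    obtain ⟨z, hwz, Q', hQ'⟩ := Walk.exists_eq_cons_of_ne (Ne.symm hxw) Q
    have hQ'path : Q'.IsPath ∧ w ∉ Q'.support := by
      have := hQp
      rw [hQ', Walk.cons_isPath_iff] at this
      exact this
    have hreach : (delVertex C w).Reachable z x :=
      reach_delVertex_of_not_mem_support Q' hQ'path.2
    rcases hnbr z hwz with rfl | rfl
    · exact Or.inl hreach
    · exact Or.inr hreach
  have key : ∀ z : V, C.Adj w z → (delVertex C w).Reachable z x →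
      labelSet L (vertComp C w x) ⊆ labelSet L (edgeSide C z w) := by
    intro z hwz hzx
    refine labelSet_mono L ?_
    intro y hy
    have hzy : (delVertex C w).Reachable z y := hzx.trans hy
    exact hzy.mono (delVertex_le_deleteEdges w (by simp))
  rcases hx2 with hreach | hreach
  · have hsub : labelSet L (vertComp C w x) ⊆ Y :=
      (key a hwa hreach).trans (labelSet_mono L (branch_subset_side hC hwb hwa hab.symm))
    exact upgrade hsub h2
  · have hsub : labelSet L (vertComp C w x) ⊆ X :=
      (key b hwb hreach).trans (labelSet_mono L (branch_subset_side hC hwa hwb hab))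
    exact upgrade hsub h1
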